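/- Let G be a finite normal form game with strict preferences and let σ* be a no-harm equilibrium of Γ(a₀,k,I) whose outcome a' is different from the initial reference point a₀. Then u_i(a') > u_i(a₀) for every player i ∈ N; in particular, a' Pareto dominates a₀ and every player is strictly better off at a' than at a₀. -/

import Mathlib

namespace NoHarm

/-- A finite normal form game with `n` players: finite action sets `A i`,
nonempty, with decidable equality, and utility functions `u i : Profile → ℝ`. -/
structure Game (n : ℕ) where
  A : Fin n → Type
  fintypeA : ∀ i, Fintype (A i)
  decA : ∀ i, DecidableEq (A i)
  neA : ∀ i, Nonempty (A i)
  u : Fin n → (∀ i, A i) → ℝ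

attribute [instance] Game.fintypeA Game.decA Game.neA

/-- Action profiles of `G`. -/
abbrev Profile {n : ℕ} (G : Game n) : Type := ∀ i, G.A i

/-- A recorded move in the extensive form game `Γ`: the acting player together
with their choice (`none` = pass, `some a` = choose action `a`; choosing the
current component of the state is "staying", any other action is "moving"). -/
abbrev Move {n : ℕ} (G : Game n) : Type := Σ i : Fin n, Option (G.A i)

/-- A node of `Γ`, identified with the history of moves leading to it
(the root is `[]`). -/
abbrev Hist {n : ℕ} (G : Game n) : Type := List (Move G)

variable {n : ℕ}

/-- One step of the left fold computing, along a history, the triple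
(current state, current reference point, player who established the current
reference point by staying -- `none` for the initial reference point). -/
def stepFold (G : Game n) (x : Profile G × Profile G × Option (Fin n)) (m : Move G) :
    Profile G × Profile G × Option (Fin n) :=
  match m with
  | ⟨_, none⟩ => x
  | ⟨i, some a⟩ =>
    if a = x.1 i then (x.1, x.1, some i)
    else (Function.update x.1 i a, x.2.1, x.2.2)

/-- The (state, reference point, proposer) data at the node `h` of `Γ(a0,·,·)`. -/
def fold3 (G : Game n) (a0 : Profile G) (h : Hist G) :
    Profile G × Profile G × Option (Fin n) :=
  h.foldl (stepFold G) (a0, a0, none)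

/-- The state `S(x)` at a node. -/
def state (G : Game n) (a0 : Profile G) (h : Hist G) : Profile G := (fold3 G a0 h).1

/-- The reference point at a node (the most recent state at which a player
stayed, initially `a0`). -/
def refpt (G : Game n) (a0 : Profile G) (h : Hist G) : Profile G := (fold3 G a0 h).2.1

/-- The player who established the current reference point by staying
(`none` if it is still the initial reference point `a0`). -/
def proposer (G : Game n) (a0 : Profile G) (h : Hist G) : Option (Fin n) :=
  (fold3 G a0 h).2.2

/-- `m` is a stay action at the node `h`: the mover chooses exactly the
component of the current state belonging to them. -/
def IsStay (G : Game n) (a0 : Profile G) (h : Hist G) (m : Move G) : Prop :=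
  m.2 = some (state G a0 h m.1)

/-- Termination condition (i): one player stayed at a state `b`, making it
the reference point, and a different player subsequently also stays at `b`. -/
def TerminalStay (G : Game n) (a0 : Profile G) (h : Hist G) : Prop :=
  ∃ (h' : Hist G) (m : Move G) (i : Fin n),
    h = h' ++ [m] ∧ IsStay G a0 h' m ∧ refpt G a0 h' = state G a0 h' ∧
    proposer G a0 h' = some i ∧ i ≠ m.1

/-- Termination condition (ii): all `n` players consecutively pass
(the last `n` moves are passes and every player is among their movers). -/
def TerminalPass (G : Game n) (h : Hist G) : Prop :=
  n ≤ h.length ∧ (∀ m ∈ h.drop (h.length - n), m.2 = none) ∧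
    (∀ i : Fin n, ∃ m ∈ h.drop (h.length - n), m.1 = i)

/-- Terminal nodes of `Γ(a0,·,·)`. -/
def Terminal (G : Game n) (a0 : Profile G) (h : Hist G) : Prop :=
  TerminalStay G a0 h ∨ TerminalPass G h

/-- Number of predecessor nodes of `h` having the same state as `h` at which
the move `m` was made. -/
def countAct (G : Game n) (a0 : Profile G) (h : Hist G) (m : Move G) : ℕ :=
  ((Finset.range h.length).filter
    (fun t => h[t]? = some m ∧ state G a0 (h.take t) = state G a0 h)).card

/-- Availability of the choice `c` for player `i` at node `h`: pass is always
available, and an action `a` is available iff `i` has chosen `a` at fewer than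
`k` predecessor nodes carrying the same state as `h`. -/
def availAct (G : Game n) (a0 : Profile G) (k : ℕ) (h : Hist G) {i : Fin n}
    (c : Option (G.A i)) : Prop :=
  ∀ a : G.A i, c = some a → countAct G a0 h ⟨i, some a⟩ < k

/-- `h` is a (valid) node of the game tree of `Γ(a0,k,I)`: at each step the
recorded mover is the active player given by the player function `I`, the
chosen action was available, and no proper predecessor is terminal. -/
structure IsNode (G : Game n) (a0 : Profile G) (k : ℕ) (I : Hist G → Fin n)
    (h : Hist G) : Prop where
  mover : ∀ (t : ℕ) (ht : t < h.length), (h.get ⟨t, ht⟩).1 = I (h.take t)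
  avail : ∀ (t : ℕ) (ht : t < h.length), availAct G a0 k (h.take t) (h.get ⟨t, ht⟩).2
  nonterm : ∀ t < h.length, ¬ Terminal G a0 (h.take t)

/-- The player function is admissible: along every path of play the numbers of
nodes at which any two players have been active differ by at most one. -/
def Admissible (G : Game n) (a0 : Profile G) (k : ℕ) (I : Hist G → Fin n) : Prop :=
  ∀ h, IsNode G a0 k I h → ∀ i j : Fin n,
    (h.map Sigma.fst).count i ≤ (h.map Sigma.fst).count j + 1

/-- A pure strategy of player `i`: a choice (pass or an action) at every node. -/
abbrev Strategy (G : Game n) (i : Fin n) : Type := Hist G → Option (G.A i)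

/-- A pure strategy profile. -/
abbrev StratProfile (G : Game n) : Type := ∀ i, Strategy G i

/-- A strategy profile is valid if at every non-terminal node of the tree the
active player's prescribed choice is available. -/
def ValidProfile (G : Game n) (a0 : Profile G) (k : ℕ) (I : Hist G → Fin n)
    (σ : StratProfile G) : Prop :=
  ∀ h, IsNode G a0 k I h → ¬ Terminal G a0 h → availAct G a0 k h (σ (I h) h)

open Classical in
/-- Play according to `σ` for (at most) the given number of steps from a node,
stopping at terminal nodes. -/
noncomputable def playN (G : Game n) (a0 : Profile G) (I : Hist G → Fin n)
    (σ : StratProfile G) : ℕ → Hist G → Hist G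
  | 0, h => h
  | (t + 1), h =>
    if Terminal G a0 h then h
    else playN G a0 I σ t (h ++ [⟨I h, σ (I h) h⟩])

/-- A (generous) upper bound for the length of any play of `Γ(a0,k,I)`. -/
def bound (G : Game n) (k : ℕ) : ℕ :=
  ((k + 2) * (Fintype.card (Profile G) + 2) * ((∑ i, Fintype.card (G.A i)) + 2) + 2)
    * (n + 2) * 4

/-- The outcome of `σ` in the subgame rooted at `h`: the reference point at the
terminal node reached by playing `σ` from `h`. -/
noncomputable def outcomeFrom (G : Game n) (a0 : Profile G) (k : ℕ)
    (I : Hist G → Fin n) (σ : StratProfile G) (h : Hist G) : Profile G :=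
  refpt G a0 (playN G a0 I σ (bound G k + 1) h)

/-- The outcome of the strategy profile `σ` in `Γ(a0,k,I)`. -/
noncomputable def outcome (G : Game n) (a0 : Profile G) (k : ℕ)
    (I : Hist G → Fin n) (σ : StratProfile G) : Profile G :=
  outcomeFrom G a0 k I σ []

/-- `σ` satisfies the no-harm principle: every stay action it prescribes, at
every (on- or off-path) non-terminal node of the tree, does not harm any other
player relative to the reference point at that node. -/
def SatNHP (G : Game n) (a0 : Profile G) (k : ℕ) (I : Hist G → Fin n)
    (σ : StratProfile G) : Prop :=
  ∀ h, IsNode G a0 k I h → ¬ Terminal G a0 h →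
    σ (I h) h = some (state G a0 h (I h)) →
    ∀ j, j ≠ I h → G.u j (refpt G a0 h) ≤ G.u j (state G a0 h)

/-- No-harm equilibrium of `Γ(a0,k,I)`: a valid strategy profile satisfying the
NHP such that at every non-terminal node the active player's choice is a best
response among deviations keeping the profile valid and NHP-compliant. -/
def NHE (G : Game n) (a0 : Profile G) (k : ℕ) (I : Hist G → Fin n)
    (σ : StratProfile G) : Prop :=
  ValidProfile G a0 k I σ ∧ SatNHP G a0 k I σ ∧
  ∀ h, IsNode G a0 k I h → ¬ Terminal G a0 h →
    ∀ τ : Strategy G (I h),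
      ValidProfile G a0 k I (Function.update σ (I h) τ) →
      SatNHP G a0 k I (Function.update σ (I h) τ) →
      G.u (I h) (outcomeFrom G a0 k I (Function.update σ (I h) τ) h) ≤
        G.u (I h) (outcomeFrom G a0 k I σ h)

/-- Subgame perfect equilibrium of `Γ(a0,k,I)` (no NHP constraint). -/
def SPE (G : Game n) (a0 : Profile G) (k : ℕ) (I : Hist G → Fin n)
    (σ : StratProfile G) : Prop :=
  ValidProfile G a0 k I σ ∧
  ∀ h, IsNode G a0 k I h → ¬ Terminal G a0 h →
    ∀ τ : Strategy G (I h),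
      ValidProfile G a0 k I (Function.update σ (I h) τ) →
      G.u (I h) (outcomeFrom G a0 k I (Function.update σ (I h) τ) h) ≤
        G.u (I h) (outcomeFrom G a0 k I σ h)

/-- `b` Pareto dominates `a`. -/
def ParetoDom (G : Game n) (b a : Profile G) : Prop :=
  (∀ i, G.u i a ≤ G.u i b) ∧ ∃ i, G.u i a < G.u i b

/-- `a` is Pareto optimal. -/
def ParetoOpt (G : Game n) (a : Profile G) : Prop := ∀ b, ¬ ParetoDom G b a

/-- `b` strictly Pareto dominates `a`. -/
def StrictDom (G : Game n) (b a : Profile G) : Prop := ∀ i, G.u i a < G.u i b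

/-- `a` is weakly Pareto optimal. -/
def WeakParetoOpt (G : Game n) (a : Profile G) : Prop := ∀ b, ¬ StrictDom G b a

/-- Preferences are strict: each utility function is injective on profiles. -/
def StrictPrefs (G : Game n) : Prop := ∀ i, Function.Injective (G.u i)



section Aux
open Classical
variable {G : Game n} {a0 : Profile G} {k : ℕ} {I : Hist G → Fin n} {σ : StratProfile G}

lemma fold3_append (h : Hist G) (m : Move G) :
    fold3 G a0 (h ++ [m]) = stepFold G (fold3 G a0 h) m := by
  simp [fold3, List.foldl_append]

lemma refpt_nil : refpt G a0 [] = a0 := rfl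

lemma snoc_stay {h : Hist G} {m : Move G} (hs : IsStay G a0 h m) :
    state G a0 (h ++ [m]) = state G a0 h ∧ refpt G a0 (h ++ [m]) = state G a0 h := by
  obtain ⟨i, c⟩ := m
  simp only [IsStay] at hs
  subst hs
  simp [state, refpt, fold3_append, stepFold]

lemma snoc_nostay {h : Hist G} {m : Move G} (hm : ¬ IsStay G a0 h m) :
    refpt G a0 (h ++ [m]) = refpt G a0 h := by
  obtain ⟨i, c⟩ := m
  simp only [IsStay] at hm
  match c, hm with
  | none, _ => simp [refpt, fold3_append, stepFold]
  | some a, hm =>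
    have : a ≠ state G a0 h i := by intro h'; exact hm (by rw [h'])
    simp only [refpt, fold3_append, stepFold]
    rw [if_neg (by exact this)]

lemma playN_zero {h : Hist G} : playN G a0 I σ 0 h = h := rfl

lemma playN_succ {h : Hist G} {t : ℕ} :
    playN G a0 I σ (t+1) h = if Terminal G a0 h then h
      else playN G a0 I σ t (h ++ [⟨I h, σ (I h) h⟩]) := by
  rw [playN]

lemma playN_terminal {h : Hist G} (hT : Terminal G a0 h) (t : ℕ) :
    playN G a0 I σ t h = h := by
  induction t with
  | zero => rfl
  | succ t _ => rw [playN_succ, if_pos hT]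

lemma playN_add (s t : ℕ) (h : Hist G) :
    playN G a0 I σ (s + t) h = playN G a0 I σ t (playN G a0 I σ s h) := by
  induction s generalizing h with
  | zero => rw [Nat.zero_add]; rfl
  | succ s ih =>
    by_cases hT : Terminal G a0 h
    · rw [playN_terminal hT, playN_terminal hT, playN_terminal hT]
    · have e : s + 1 + t = (s + t) + 1 := by omega
      rw [e, playN_succ, if_neg hT, playN_succ, if_neg hT, ih]

lemma isNode_nil : IsNode G a0 k I [] := by
  constructor <;> intro t ht <;> simp at ht

lemma IsNode.take' {h : Hist G} (hn : IsNode G a0 k I h) (t : ℕ) :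
    IsNode G a0 k I (h.take t) := by
  have hlen : (h.take t).length = min t h.length := by simp
  constructor
  · intro s hs
    have hs1 : s < h.length := by omega
    have e1 : (h.take t).get ⟨s, hs⟩ = h.get ⟨s, hs1⟩ := by
      simp [List.get_eq_getElem, List.getElem_take]
    have e2 : (h.take t).take s = h.take s := by
      rw [List.take_take, min_eq_left (by omega)]
    rw [e1, e2]; exact hn.mover s hs1
  · intro s hs
    have hs1 : s < h.length := by omega
    have e1 : (h.take t).get ⟨s, hs⟩ = h.get ⟨s, hs1⟩ := by
      simp [List.get_eq_getElem, List.getElem_take]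
    have e2 : (h.take t).take s = h.take s := by
      rw [List.take_take, min_eq_left (by omega)]
    rw [e1, e2]; exact hn.avail s hs1
  · intro s hs
    have e2 : (h.take t).take s = h.take s := by
      rw [List.take_take, min_eq_left (by omega)]
    rw [e2]; exact hn.nonterm s (by omega)

lemma IsNode.snoc {h : Hist G} (hn : IsNode G a0 k I h) (hT : ¬ Terminal G a0 h)
    {c : Option (G.A (I h))} (hc : availAct G a0 k h c) :
    IsNode G a0 k I (h ++ [⟨I h, c⟩]) := by
  have hlen : (h ++ [(⟨I h, c⟩ : Move G)]).length = h.length + 1 := by simp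
  constructor
  · intro s hs
    rcases lt_or_eq_of_le (Nat.lt_succ_iff.mp (by omega : s < h.length + 1)) with hlt | heq
    · have e1 : (h ++ [(⟨I h, c⟩ : Move G)]).get ⟨s, hs⟩ = h.get ⟨s, hlt⟩ := by
        simp [List.get_eq_getElem, List.getElem_append_left hlt]
      have e2 : (h ++ [(⟨I h, c⟩ : Move G)]).take s = h.take s :=
        List.take_append_of_le_length (by omega)
      rw [e1, e2]; exact hn.mover s hlt
    · subst heq
      have e1 : (h ++ [(⟨I h, c⟩ : Move G)]).get ⟨h.length, hs⟩ = ⟨I h, c⟩ := by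
        simp [List.get_eq_getElem]
      have e2 : (h ++ [(⟨I h, c⟩ : Move G)]).take h.length = h := by
        rw [List.take_append_of_le_length le_rfl, List.take_length]
      rw [e1, e2]
  · intro s hs
    rcases lt_or_eq_of_le (Nat.lt_succ_iff.mp (by omega : s < h.length + 1)) with hlt | heq
    · have e1 : (h ++ [(⟨I h, c⟩ : Move G)]).get ⟨s, hs⟩ = h.get ⟨s, hlt⟩ := by
        simp [List.get_eq_getElem, List.getElem_append_left hlt]
      have e2 : (h ++ [(⟨I h, c⟩ : Move G)]).take s = h.take s :=
        List.take_append_of_le_length (by omega)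
      rw [e1, e2]; exact hn.avail s hlt
    · subst heq
      have e1 : (h ++ [(⟨I h, c⟩ : Move G)]).get ⟨h.length, hs⟩ = ⟨I h, c⟩ := by
        simp [List.get_eq_getElem]
      have e2 : (h ++ [(⟨I h, c⟩ : Move G)]).take h.length = h := by
        rw [List.take_append_of_le_length le_rfl, List.take_length]
      rw [e1, e2]; exact hc
  · intro s hs
    rcases lt_or_eq_of_le (Nat.lt_succ_iff.mp (by omega : s < h.length + 1)) with hlt | heq
    · have e2 : (h ++ [(⟨I h, c⟩ : Move G)]).take s = h.take s :=
        List.take_append_of_le_length (by omega)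
      rw [e2]; exact hn.nonterm s hlt
    · subst heq
      have e2 : (h ++ [(⟨I h, c⟩ : Move G)]).take h.length = h := by
        rw [List.take_append_of_le_length le_rfl, List.take_length]
      rw [e2]; exact hT

lemma isNode_playN (hV : ValidProfile G a0 k I σ) (t : ℕ) {h : Hist G}
    (hn : IsNode G a0 k I h) : IsNode G a0 k I (playN G a0 I σ t h) := by
  induction t generalizing h with
  | zero => exact hn
  | succ t ih =>
    rw [playN_succ]
    by_cases hT : Terminal G a0 h
    · rw [if_pos hT]; exact hn
    · rw [if_neg hT]; exact ih (hn.snoc hT (hV h hn hT))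

lemma length_playN (t : ℕ) {h : Hist G} (hT : ¬ Terminal G a0 (playN G a0 I σ t h)) :
    (playN G a0 I σ t h).length = h.length + t := by
  induction t generalizing h with
  | zero => rfl
  | succ t ih =>
    by_cases hTh : Terminal G a0 h
    · rw [playN_terminal hTh] at hT; exact absurd hTh hT
    · rw [playN_succ, if_neg hTh] at hT ⊢
      rw [ih hT]; simp; omega


lemma refpt_mono (hV : ValidProfile G a0 k I σ) (hN : SatNHP G a0 k I σ) (i : Fin n)
    (t : ℕ) : ∀ {h : Hist G}, IsNode G a0 k I h →
    (∀ r < t, I (playN G a0 I σ r h) = i → ¬ Terminal G a0 (playN G a0 I σ r h) →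
      σ i (playN G a0 I σ r h) ≠ some (state G a0 (playN G a0 I σ r h) i)) →
    G.u i (refpt G a0 h) ≤ G.u i (refpt G a0 (playN G a0 I σ t h)) := by
  induction t with
  | zero => intro h _ _; exact le_refl _
  | succ t ih =>
    intro h hn Hi
    by_cases hT : Terminal G a0 h
    · rw [playN_terminal hT]
    · rw [playN_succ, if_neg hT]
      set m : Move G := ⟨I h, σ (I h) h⟩ with hm
      have hn1 : IsNode G a0 k I (h ++ [m]) := hn.snoc hT (hV h hn hT)
      have hplay : ∀ r, playN G a0 I σ r (h ++ [m]) = playN G a0 I σ (r + 1) h := by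
        intro r; rw [playN_succ, if_neg hT]
      have step : G.u i (refpt G a0 h) ≤ G.u i (refpt G a0 (h ++ [m])) := by
        by_cases hst : IsStay G a0 h m
        · have hne : I h ≠ i := by
            intro hIh
            have h0 := Hi 0 (Nat.succ_pos t)
            rw [playN_zero] at h0
            have hst' : σ (I h) h = some (state G a0 h (I h)) := hst
            rw [hIh] at hst'
            exact h0 hIh hT hst'
          have := hN h hn hT hst i (fun e => hne e.symm)
          rw [(snoc_stay hst).2]
          exact this
        · rw [snoc_nostay hst]
      refine le_trans step (ih hn1 ?_)
      intro r hr
      rw [hplay r]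
      exact Hi (r + 1) (by omega)

lemma valid_update_pass (hV : ValidProfile G a0 k I σ) (j : Fin n) :
    ValidProfile G a0 k I (Function.update σ j (fun _ => none)) := by
  intro h hn hT
  by_cases hj : I h = j
  · subst hj
    rw [Function.update_self]
    intro a ha; cases ha
  · rw [Function.update_of_ne hj]
    exact hV h hn hT

lemma satNHP_update_pass (hN : SatNHP G a0 k I σ) (j : Fin n) :
    SatNHP G a0 k I (Function.update σ j (fun _ => none)) := by
  intro h hn hT hstay
  by_cases hj : I h = j
  · rw [hj] at hstay
    rw [Function.update_self] at hstay
    cases hstay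
  · rw [Function.update_of_ne hj] at hstay
    exact hN h hn hT hstay

lemma sum_count_eq {α : Type*} [Fintype α] [DecidableEq α] (l : List α) :
    ∑ i : α, l.count i = l.length := by
  induction l with
  | nil => simp
  | cons a l ih => simp [List.count_cons, Finset.sum_add_distrib, ih]

lemma flat_of_balanced {c : Fin n → ℕ} {q : ℕ} (hn2 : 2 ≤ n)
    (hbal : ∀ i j : Fin n, c i ≤ c j + 1) (hsum : ∑ i, c i = n * q) :
    ∀ i, c i = q := by
  have hcard : (Finset.univ : Finset (Fin n)).card = n := by simp
  intro i
  have hmem : i ∈ (Finset.univ : Finset (Fin n)) := Finset.mem_univ i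
  by_contra hne
  rcases Nat.lt_or_ge (c i) q with hlt | hge
  · -- c i < q : sum too small
    have hub : ∀ j ∈ Finset.univ.erase i, c j ≤ c i + 1 := fun j _ => hbal j i
    have h2 : ∑ j, c j ≤ c i + (n - 1) * (c i + 1) := by
      rw [← Finset.add_sum_erase Finset.univ c hmem]
      have h3 := Finset.sum_le_card_nsmul (Finset.univ.erase i) c (c i + 1) hub
      rw [Finset.card_erase_of_mem hmem, hcard, smul_eq_mul] at h3
      exact Nat.add_le_add_left h3 _
    rw [hsum] at h2
    have h4 : (n - 1) * (c i + 1) ≤ (n - 1) * q := Nat.mul_le_mul_left _ (by omega)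
    have h5 : n * q ≤ c i + (n - 1) * q := le_trans h2 (Nat.add_le_add_left h4 _)
    have h6 : (n - 1) * q + q = n * q := by
      have : n - 1 + 1 = n := by omega
      rw [← this, Nat.add_mul, Nat.one_mul, this]
    omega
  · have hgt : q < c i := lt_of_le_of_ne hge (fun e => hne e.symm)
    have hlb : ∀ j ∈ Finset.univ.erase i, q ≤ c j := by
      intro j _
      have := hbal i j
      omega
    have h2 : c i + (n - 1) * q ≤ ∑ j, c j := by
      rw [← Finset.add_sum_erase Finset.univ c hmem]
      have h3 := Finset.card_nsmul_le_sum (Finset.univ.erase i) c q hlb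
      rw [Finset.card_erase_of_mem hmem, hcard, smul_eq_mul] at h3
      exact Nat.add_le_add_left h3 _
    rw [hsum] at h2
    have h6 : (n - 1) * q + q = n * q := by
      have : n - 1 + 1 = n := by omega
      rw [← this, Nat.add_mul, Nat.one_mul, this]
    omega

lemma terminal_playN (hn2 : 2 ≤ n) (hV : ValidProfile G a0 k I σ)
    (hI : Admissible G a0 k I) :
    Terminal G a0 (playN G a0 I σ (bound G k + 1) []) := by
  by_contra hT
  set W := bound G k + 1 with hWdef
  set h : Hist G := playN G a0 I σ W [] with hh
  have hlen : h.length = W := by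
    have := length_playN (a0 := a0) (σ := σ) (I := I) W (h := []) hT
    simpa using this
  have hnode : IsNode G a0 k I h := isNode_playN hV W isNode_nil
  have hpre : ∀ t ≤ W, ¬ Terminal G a0 (h.take t) := by
    intro t ht
    rcases lt_or_eq_of_le ht with hlt | heq
    · exact hnode.nonterm t (by omega)
    · subst heq; rw [← hlen, List.take_length]; exact hT
  -- counts are flat at multiples of n
  have hflat : ∀ t ≤ W, n ∣ t → ∀ i : Fin n, ((h.take t).map Sigma.fst).count i = t / n := by
    intro t ht hdvd i
    have hbal : ∀ i j : Fin n, ((h.take t).map Sigma.fst).count i ≤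
        ((h.take t).map Sigma.fst).count j + 1 :=
      fun i j => hI (h.take t) (hnode.take' t) i j
    have hlen2 : ((h.take t).map Sigma.fst).length = t := by
      simp [hlen, ht]
    have hsum : ∑ j : Fin n, ((h.take t).map Sigma.fst).count j = n * (t / n) := by
      rw [sum_count_eq, hlen2, Nat.mul_div_cancel' hdvd]
    exact flat_of_balanced hn2 hbal hsum i
  -- every aligned block contains every player
  have hblock : ∀ t, n ∣ t → t + n ≤ W → ∀ i : Fin n,
      ∃ r, t ≤ r ∧ r < t + n ∧ ∃ (hr : r < h.length), (h[r]'hr).1 = i := by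
    intro t hdvd hle i
    have e1 : h.take (t + n) = h.take t ++ (h.drop t).take n := List.take_add ..
    have c1 : ((h.take (t+n)).map Sigma.fst).count i = (t + n) / n :=
      hflat (t+n) hle (by exact Nat.dvd_add hdvd dvd_rfl) i
    have c2 : ((h.take t).map Sigma.fst).count i = t / n := hflat t (by omega) hdvd i
    have c3 : (((h.drop t).take n).map Sigma.fst).count i ≥ 1 := by
      rw [e1, List.map_append, List.count_append, c2] at c1
      have : (t + n) / n = t / n + 1 := by
        obtain ⟨c, rfl⟩ := hdvd
        have e2 : n * c + n = n * (c + 1) := by ring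
        rw [Nat.mul_div_cancel_left c (by omega), e2, Nat.mul_div_cancel_left _ (by omega)]
      omega
    have hmem : i ∈ ((h.drop t).take n).map Sigma.fst := List.count_pos_iff.mp (by omega)
    obtain ⟨m, hm, hmi⟩ := List.mem_map.mp hmem
    obtain ⟨j, hj, hjm⟩ := List.getElem_of_mem hm
    have hjlen : ((h.drop t).take n).length = n := by
      simp [hlen]; omega
    have hjn : j < n := by omega
    have hr : t + j < h.length := by omega
    refine ⟨t + j, by omega, by omega, hr, ?_⟩
    have : ((h.drop t).take n)[j] = h[t + j]'hr := by
      rw [List.getElem_take, List.getElem_drop]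
    rw [← this, hjm, hmi]
  -- every aligned block contains a non-pass move
  have hnp : ∀ t, n ∣ t → t + n ≤ W →
      ∃ r, t ≤ r ∧ r < t + n ∧ ∃ (hr : r < h.length), (h[r]'hr).2 ≠ none := by
    intro t hdvd hle
    by_contra hall
    push_neg at hall
    apply hpre (t + n) hle
    right
    have hlen3 : (h.take (t + n)).length = t + n := by simp [hlen]; omega
    have hwin : (h.take (t+n)).drop ((h.take (t+n)).length - n) = (h.drop t).take n := by
      rw [hlen3]
      have : t + n - n = t := by omega
      rw [this, List.drop_take]
      congr 1
      omega
    refine ⟨by omega, ?_, ?_⟩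
    · intro m hm
      rw [hwin] at hm
      obtain ⟨j, hj, hjm⟩ := List.getElem_of_mem hm
      have hjlen : ((h.drop t).take n).length = n := by simp [hlen]; omega
      have hr : t + j < h.length := by omega
      have e : ((h.drop t).take n)[j] = h[t + j]'hr := by
        rw [List.getElem_take, List.getElem_drop]
      have := hall (t + j) (by omega) (by omega) hr
      rw [← hjm, e]
      exact this
    · intro i
      obtain ⟨r, hr1, hr2, hrlen, hri⟩ := hblock t hdvd hle i
      have hjlen : ((h.drop t).take n).length = n := by simp [hlen]; omega
      have e : ((h.drop t).take n)[r - t]'(by omega) = h[r]'hrlen := by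
        rw [List.getElem_take, List.getElem_drop]
        congr 1
        omega
      refine ⟨h[r]'hrlen, ?_, hri⟩
      rw [hwin, ← e]
      exact List.getElem_mem _
  -- pigeonhole on non-pass moves
  set C := Fintype.card (Profile G) with hC
  set M := Fintype.card (Move G) with hMdef
  set S := ∑ i, Fintype.card (G.A i) with hSdef
  set Q := C * M * k + 1 with hQ
  have hS : n ≤ S := by
    rw [hSdef]
    calc n = ∑ _i : Fin n, 1 := by simp
    _ ≤ ∑ i, Fintype.card (G.A i) :=
        Finset.sum_le_sum (fun i _ => Fintype.card_pos)
  have hM2 : M = S + n := by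
    rw [hMdef, hSdef]
    simp [Fintype.card_sigma, Fintype.card_option, Finset.sum_add_distrib]
  have hQn : Q * n ≤ W := by
    have hMle : M ≤ 2 * S := by omega
    have step1 : Q * n ≤ (C * (2 * S) * k + 1) * n := by
      have : Q ≤ C * (2*S) * k + 1 := by
        have := Nat.mul_le_mul_right k (Nat.mul_le_mul_left C hMle)
        omega
      exact Nat.mul_le_mul_right n this
    have step2 : (C * (2 * S) * k + 1) * n ≤ ((k+2)*(C+2)*(S+2)+2)*(n+2)*4 := by
      nlinarith [Nat.zero_le (k*C*S), Nat.zero_le n, Nat.zero_le (k*C), Nat.zero_le (k*S),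
        Nat.zero_le (C*S), Nat.zero_le k, Nat.zero_le C, Nat.zero_le S]
    calc Q * n ≤ (C * (2 * S) * k + 1) * n := step1
    _ ≤ ((k+2)*(C+2)*(S+2)+2)*(n+2)*4 := step2
    _ ≤ W := by
        rw [hWdef]
        have e : bound G k = ((k+2)*(C+2)*(S+2)+2)*(n+2)*4 := rfl
        omega
  have hposex : ∀ j : ℕ, ∃ r, j < Q →
      (j*n ≤ r ∧ r < j*n + n ∧ ∃ (hr : r < h.length), (h[r]'hr).2 ≠ none) := by
    intro j
    by_cases hj : j < Q
    · obtain ⟨r, hr1, hr2, hr3⟩ := hnp (j*n) (dvd_mul_left n j)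
        (by
          have : (j+1) * n ≤ Q * n := Nat.mul_le_mul_right n (by omega)
          have e : (j+1)*n = j*n + n := by ring
          omega)
      exact ⟨r, fun _ => ⟨hr1, hr2, hr3⟩⟩
    · exact ⟨0, fun hc => absurd hc hj⟩
  choose pos hpos using hposex
  set m0 : Move G := ⟨⟨0, by omega⟩, none⟩ with hm0
  set φ : ℕ → Profile G × Move G :=
    fun r => (state G a0 (h.take r), h.getD r m0) with hφ
  set s : Finset ℕ := (Finset.range Q).image pos with hsdef
  have hposmem : ∀ r ∈ s, ∃ j < Q, pos j = r ∧ j*n ≤ r ∧ r < j*n + n ∧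
      ∃ (hr : r < h.length), (h[r]'hr).2 ≠ none := by
    intro r hr
    obtain ⟨j, hj, hjr⟩ := Finset.mem_image.mp hr
    rw [Finset.mem_range] at hj
    obtain ⟨h1, h2, h3⟩ := hpos j hj
    subst hjr
    exact ⟨j, hj, rfl, h1, h2, h3⟩
  have hcard : s.card = Q := by
    rw [hsdef, Finset.card_image_of_injOn, Finset.card_range]
    intro j1 hj1 j2 hj2 he
    rw [Finset.mem_coe, Finset.mem_range] at hj1 hj2
    obtain ⟨a1, b1, _⟩ := hpos j1 hj1
    obtain ⟨a2, b2, _⟩ := hpos j2 hj2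
    by_contra hne
    rcases Nat.lt_or_ge j1 j2 with hlt | hge
    · have : (j1+1) * n ≤ j2 * n := Nat.mul_le_mul_right n (by omega)
      have e : (j1+1)*n = j1*n + n := by ring
      omega
    · have hlt : j2 < j1 := by omega
      have : (j2+1) * n ≤ j1 * n := Nat.mul_le_mul_right n (by omega)
      have e : (j2+1)*n = j2*n + n := by ring
      omega
  have hmaps : ∀ r ∈ s, φ r ∈ (Finset.univ : Finset (Profile G × Move G)) :=
    fun r _ => Finset.mem_univ _
  have hcardlt : (Finset.univ : Finset (Profile G × Move G)).card * k < s.card := by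
    rw [hcard, Finset.card_univ, Fintype.card_prod, hQ, ← hC, ← hMdef]
    omega
  obtain ⟨y, _, hy⟩ :=
    Finset.exists_lt_card_fiber_of_mul_lt_card_of_maps_to hmaps hcardlt
  set F := s.filter (fun r => φ r = y) with hF
  have hFne : F.Nonempty := Finset.card_pos.mp (by omega)
  set tm := F.max' hFne with htm
  have htmF : tm ∈ F := F.max'_mem hFne
  have htms : tm ∈ s := Finset.mem_filter.mp htmF |>.1
  obtain ⟨j0, hj0, hj0tm, _, htmlt, htmlen, htmnp⟩ := hposmem tm htms
  have htmW : tm < h.length := htmlen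
  obtain ⟨a, ha⟩ : ∃ a, (h[tm]'htmW).2 = some a :=
    Option.ne_none_iff_exists'.mp htmnp
  have havail := hnode.avail tm htmW
  have hget : h.get ⟨tm, htmW⟩ = h[tm]'htmW := rfl
  rw [hget] at havail
  have hcnt : countAct G a0 (h.take tm) ⟨(h[tm]'htmW).1, some a⟩ < k := havail a ha
  have hmv : (⟨(h[tm]'htmW).1, some a⟩ : Move G) = h[tm]'htmW := by
    rw [← ha]
  rw [hmv] at hcnt
  -- now show countAct ≥ k
  have hsub : F.erase tm ⊆ (Finset.range (h.take tm).length).filter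
      (fun t => (h.take tm)[t]? = some (h[tm]'htmW) ∧
        state G a0 ((h.take tm).take t) = state G a0 (h.take tm)) := by
    intro r hr
    have hrne : r ≠ tm := (Finset.mem_erase.mp hr).1
    have hrF : r ∈ F := (Finset.mem_erase.mp hr).2
    have hrlt : r < tm := lt_of_le_of_ne (F.le_max' r hrF) hrne
    have hrs : r ∈ s := Finset.mem_filter.mp hrF |>.1
    obtain ⟨_, _, _, _, _, hrlen, _⟩ := hposmem r hrs
    have hφr : φ r = y := Finset.mem_filter.mp hrF |>.2
    have hφtm : φ tm = y := Finset.mem_filter.mp htmF |>.2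
    have htake : (h.take tm).length = tm := by
      rw [List.length_take]; omega
    rw [Finset.mem_filter, Finset.mem_range, htake]
    refine ⟨hrlt, ?_, ?_⟩
    · have e1 : (h.take tm)[r]? = h[r]? := by
        rw [List.getElem?_take, if_pos hrlt]
      have e2 : h[r]? = some (h[r]'hrlen) := List.getElem?_eq_getElem hrlen
      have e3 : h[r]'hrlen = h[tm]'htmW := by
        have d1 : h.getD r m0 = h[r]'hrlen := List.getD_eq_getElem h m0 hrlen
        have d2 : h.getD tm m0 = h[tm]'htmW := List.getD_eq_getElem h m0 htmW
        have : (φ r).2 = (φ tm).2 := by rw [hφr, hφtm]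
        rw [hφ] at this
        simp only at this
        rw [d1, d2] at this
        exact this
      rw [e1, e2, e3]
    · have e4 : (h.take tm).take r = h.take r := by
        rw [List.take_take, min_eq_left (by omega)]
      have : (φ r).1 = (φ tm).1 := by rw [hφr, hφtm]
      rw [hφ] at this
      simp only at this
      rw [e4]
      exact this
  have hk2 : k ≤ countAct G a0 (h.take tm) (h[tm]'htmW) := by
    have := Finset.card_le_card hsub
    rw [Finset.card_erase_of_mem htmF] at this
    rw [countAct]
    omega
  omega

end Aux

/-- If `σ` is a no-harm equilibrium of `Γ(a0,k,I)` whose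
outcome `a'` differs from the initial reference point `a0`, then every player
is strictly better off at `a'` than at `a0`; in particular `a'` Pareto
dominates `a0`. -/
theorem nhe_outcome_ne_ref_strict_improvement {n : ℕ} (hn : 2 ≤ n) (G : Game n)
    (hG : StrictPrefs G) (a0 : Profile G) (k : ℕ) (hk : 0 < k)
    (I : Hist G → Fin n) (hI : Admissible G a0 k I) (σ : StratProfile G)
    (hσ : NHE G a0 k I σ) (a' : Profile G) (ha' : outcome G a0 k I σ = a')
    (hne : a' ≠ a0) :
    (∀ i, G.u i a0 < G.u i a') ∧ ParetoDom G a' a0 := by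

  classical
  obtain ⟨hV, hN, hBest⟩ := hσ
  set W := bound G k + 1 with hW
  have hterm : Terminal G a0 (playN G a0 I σ W []) := terminal_playN hn hV hI
  have hrefW : refpt G a0 (playN G a0 I σ W []) = a' := ha'
  have houtFrom : ∀ s, outcomeFrom G a0 k I σ (playN G a0 I σ s []) = a' := by
    intro s
    have e1 : playN G a0 I σ W (playN G a0 I σ s []) = playN G a0 I σ (s + W) [] :=
      (playN_add s W []).symm
    have e2 : playN G a0 I σ (W + s) [] = playN G a0 I σ s (playN G a0 I σ W []) :=
      playN_add W s []
    rw [outcomeFrom, e1, Nat.add_comm s W, e2, playN_terminal hterm, hrefW]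
  have key : ∀ i, G.u i a0 ≤ G.u i a' := by
    intro i
    by_cases hex : ∃ s, ¬ Terminal G a0 (playN G a0 I σ s []) ∧
        I (playN G a0 I σ s []) = i ∧
        σ i (playN G a0 I σ s []) = some (state G a0 (playN G a0 I σ s []) i)
    · obtain ⟨hT, hIx, hstay⟩ := Nat.find_spec hex
      set s := Nat.find hex with hs
      set xs := playN G a0 I σ s [] with hxs
      have hnode : IsNode G a0 k I xs := isNode_playN hV s isNode_nil
      have step1 : G.u i a0 ≤ G.u i (refpt G a0 xs) := by
        have := refpt_mono (a0 := a0) hV hN i s isNode_nil (fun r hr h1 h2 h3 =>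
          Nat.find_min hex hr ⟨h2, h1, h3⟩)
        rwa [refpt_nil] at this
      set σ' := Function.update σ (I xs) (fun _ => none) with hσ'
      have hσ'i : ∀ h', σ' i h' = none := by
        intro h'; rw [hσ', ← hIx, Function.update_self]
      have step2 : G.u i (refpt G a0 xs) ≤ G.u i (outcomeFrom G a0 k I σ' xs) := by
        have hV' : ValidProfile G a0 k I σ' := valid_update_pass hV _
        have hN' : SatNHP G a0 k I σ' := satNHP_update_pass hN _
        exact refpt_mono hV' hN' i (bound G k + 1) hnode
          (fun r hr h1 h2 h3 => by rw [hσ'i] at h3; cases h3)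
      have step3 : G.u i (outcomeFrom G a0 k I σ' xs) ≤ G.u i (outcomeFrom G a0 k I σ xs) := by
        have := hBest xs hnode hT (fun _ => none)
          (valid_update_pass hV _) (satNHP_update_pass hN _)
        rw [hσ', hIx]
        rwa [hIx] at this
      have step4 : outcomeFrom G a0 k I σ xs = a' := houtFrom s
      rw [← step4]
      exact le_trans step1 (le_trans step2 step3)
    · push_neg at hex
      have := refpt_mono (a0 := a0) hV hN i W isNode_nil (fun r hr h1 h2 h3 => by
        exact hex r h2 h1 h3)
      rwa [refpt_nil, hrefW] at this
  have strict : ∀ i, G.u i a0 < G.u i a' := by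
    intro i
    refine lt_of_le_of_ne (key i) (fun e => hne ?_)
    exact (hG i e).symm
  exact ⟨strict, fun i => (strict i).le, ⟨⟨0, by omega⟩, strict _⟩⟩


end NoHarm
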